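/- Let P be a strictly convex real-valued function on d×d density matrices with P(ρ) = Tr(ρ²), and let I be Hermitian. If ρ* minimizes P subject to Tr(ρI) = w for some w > Tr(I)/d, then ρ* achieves the maximal expectation value among all states of purity P(ρ*); i.e., there is no state σ with Tr(σ²) = Tr(ρ*²) and Tr(σI) > w. -/

import Mathlib

open ComplexOrder

section Helpers

open Matrix

lemma posSemidef_real_smul {n : Type*} [Fintype n] {M : Matrix n n ℂ}
    (hM : M.PosSemidef) {c : ℝ} (hc : 0 ≤ c) : ((c : ℂ) • M).PosSemidef := by
  constructor
  · unfold Matrix.IsHermitian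
    rw [conjTranspose_smul, hM.1.eq]
    simp
  · intro x
    have h := hM.2 x
    have hc' : (0 : ℂ) ≤ (c : ℂ) := by
      rw [Complex.zero_le_real]; exact hc
    exact (hM.smul hc').2 x

lemma trace_real_of_herm {n : Type*} [Fintype n] {A B : Matrix n n ℂ}
    (hA : A.IsHermitian) (hB : B.IsHermitian) :
    (A * B).trace = (((A * B).trace).re : ℂ) := by
  have h : star ((A * B).trace) = (A * B).trace := by
    rw [← Matrix.trace_conjTranspose, conjTranspose_mul, hA.eq, hB.eq, Matrix.trace_mul_comm]
  exact (Complex.conj_eq_iff_re.mp h).symm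

lemma trace_real_of_herm' {n : Type*} [Fintype n] {A : Matrix n n ℂ}
    (hA : A.IsHermitian) : A.trace = ((A.trace).re : ℂ) := by
  have h : star (A.trace) = A.trace := by
    rw [← Matrix.trace_conjTranspose, hA.eq]
  exact (Complex.conj_eq_iff_re.mp h).symm

lemma trace_sq_pos_of_ne_zero {n : Type*} [Fintype n] [DecidableEq n]
    {D : Matrix n n ℂ} (hD : D ≠ 0) : 0 < ((Dᴴ * D).trace).re := by
  have h : ((Dᴴ * D).trace) = ∑ j, ∑ i, ((Complex.normSq (D i j) : ℝ) : ℂ) := by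
    simp only [Matrix.trace, Matrix.diag, Matrix.mul_apply, Matrix.conjTranspose_apply]
    congr 1; funext j; congr 1; funext i
    rw [mul_comm]; rw [show star (D i j) = (starRingEnd ℂ) (D i j) from rfl, Complex.mul_conj]
  rw [h]
  have hne : ∃ i j, D i j ≠ 0 := by
    by_contra hc
    push_neg at hc
    exact hD (by ext i j; simpa using hc i j)
  obtain ⟨i0, j0, h0⟩ := hne
  have : ((∑ j, ∑ i, ((Complex.normSq (D i j) : ℝ) : ℂ))).re
      = ∑ j, ∑ i, Complex.normSq (D i j) := by
    norm_num
  rw [this]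
  refine Finset.sum_pos' (fun j _ => Finset.sum_nonneg fun i _ => Complex.normSq_nonneg _) ?_
  exact ⟨j0, Finset.mem_univ _, Finset.sum_pos' (fun i _ => Complex.normSq_nonneg _)
    ⟨i0, Finset.mem_univ _, Complex.normSq_pos.mpr h0⟩⟩

end Helpers

/-- A density matrix: positive semidefinite with unit trace. -/
def IsDensityMatrix {d : ℕ} (ρ : Matrix (Fin d) (Fin d) ℂ) : Prop :=
  ρ.PosSemidef ∧ ρ.trace = 1

open Matrix in
/-- If `ρ*` minimizes the linear purity `Tr(ρ²)` among density matrices with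
`Tr(ρ I) = w` for `w > Tr(I)/d`, then no state of the same purity achieves a
strictly larger expectation value of `I`. -/
theorem min_purity_is_max_expectation
    (d : ℕ) (hd : 0 < d)
    (I : Matrix (Fin d) (Fin d) ℂ) (hI : I.IsHermitian)
    (ρ : Matrix (Fin d) (Fin d) ℂ) (hρ : IsDensityMatrix ρ)
    (w : ℝ) (hw : (ρ * I).trace = (w : ℂ))
    (hwgt : (I.trace).re / d < w)
    (hmin : ∀ σ : Matrix (Fin d) (Fin d) ℂ, IsDensityMatrix σ →
      (σ * I).trace = (w : ℂ) → ((ρ * ρ).trace).re ≤ ((σ * σ).trace).re) :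
    ¬ ∃ σ : Matrix (Fin d) (Fin d) ℂ, IsDensityMatrix σ ∧
      (σ * σ).trace = (ρ * ρ).trace ∧ w < ((σ * I).trace).re := by
  rintro ⟨σ, hσ, hpur, hgt⟩
  have hd' : (0 : ℝ) < (d : ℝ) := by exact_mod_cast hd
  have hdne : (d : ℝ) ≠ 0 := hd'.ne'
  have hσH : σ.IsHermitian := hσ.1.1
  set w' : ℝ := ((σ * I).trace).re with hw'def
  set r : ℝ := (I.trace).re with hrdef
  set S : ℝ := ((σ * σ).trace).re with hSdef
  have hσI : (σ * I).trace = (w' : ℂ) := trace_real_of_herm hσH hI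
  have hTrI : I.trace = (r : ℂ) := trace_real_of_herm' hI
  have hσσ : (σ * σ).trace = (S : ℂ) := trace_real_of_herm hσH hσH
  set m : ℝ := r / d with hmdef
  have hmw : m < w := hwgt
  have hww' : w < w' := hgt
  -- Step 1 : S > 1/d
  have hSd : 1 / (d : ℝ) < S := by
    set D := σ - ((d : ℝ)⁻¹ : ℂ) • (1 : Matrix (Fin d) (Fin d) ℂ) with hDdef
    have hDH : Dᴴ = D := by
      rw [hDdef, Matrix.conjTranspose_sub, hσH.eq, Matrix.conjTranspose_smul]
      simp
    have hDne : D ≠ 0 := by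
      intro h0
      have hσeq : σ = ((d : ℝ)⁻¹ : ℂ) • 1 := by
        have := sub_eq_zero.mp h0
        simpa using this
      have h1 : (σ * I).trace = ((d : ℝ)⁻¹ : ℂ) * I.trace := by
        rw [hσeq, Matrix.smul_mul, Matrix.one_mul, Matrix.trace_smul, smul_eq_mul]
      rw [hσI, hTrI] at h1
      have h2 : w' = (d : ℝ)⁻¹ * r := by exact_mod_cast h1
      have h3 : (d : ℝ)⁻¹ * r = m := by rw [hmdef]; ring
      rw [h2, h3] at hww'
      linarith
    have hDD : (Dᴴ * D).trace = ((S - 1 / d : ℝ) : ℂ) := by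
      rw [hDH, hDdef]
      have hexp : (σ - ((d : ℝ)⁻¹ : ℂ) • 1) * (σ - ((d : ℝ)⁻¹ : ℂ) • 1)
          = σ * σ - ((d : ℝ)⁻¹ : ℂ) • σ - ((d : ℝ)⁻¹ : ℂ) • σ
            + (((d : ℝ)⁻¹ * (d : ℝ)⁻¹ : ℝ) : ℂ) • (1 : Matrix (Fin d) (Fin d) ℂ) := by
        simp only [Matrix.sub_mul, Matrix.mul_sub, Matrix.smul_mul, Matrix.mul_smul,
          Matrix.one_mul, Matrix.mul_one, smul_smul]
        push_cast
        module
      rw [hexp]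
      simp only [Matrix.trace_add, Matrix.trace_sub, Matrix.trace_smul, Matrix.trace_one,
        Fintype.card_fin, hσ.2, hσσ, smul_eq_mul, mul_one]
      have hre : (S : ℝ) - (d:ℝ)⁻¹ - (d:ℝ)⁻¹ + (d:ℝ)⁻¹ * (d:ℝ)⁻¹ * d = S - 1 / d := by
        field_simp
        ring
      calc (S : ℂ) - ((d:ℝ)⁻¹ : ℂ) - ((d:ℝ)⁻¹ : ℂ)
            + (((d:ℝ)⁻¹ * (d:ℝ)⁻¹ : ℝ) : ℂ) * (d : ℂ)
          = ((S - (d:ℝ)⁻¹ - (d:ℝ)⁻¹ + (d:ℝ)⁻¹ * (d:ℝ)⁻¹ * d : ℝ) : ℂ) := by push_cast; ring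
        _ = ((S - 1 / d : ℝ) : ℂ) := by rw [hre]
    have hpos := trace_sq_pos_of_ne_zero hDne
    rw [hDD] at hpos
    simp only [Complex.ofReal_re] at hpos
    linarith
  -- Step 2 : the mixed state τ
  set t : ℝ := (w - m) / (w' - m) with htdef
  have hwm : 0 < w' - m := by linarith
  have ht0 : 0 < t := div_pos (by linarith) hwm
  have ht1 : t < 1 := (div_lt_one hwm).mpr (by linarith)
  set u : ℝ := (1 - t) / d with hudef
  have hu0 : 0 ≤ u := div_nonneg (by linarith) hd'.le
  set τ := (t : ℂ) • σ + (u : ℂ) • (1 : Matrix (Fin d) (Fin d) ℂ) with hτdef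
  have hτpsd : τ.PosSemidef :=
    (posSemidef_real_smul hσ.1 ht0.le).add (posSemidef_real_smul Matrix.PosSemidef.one hu0)
  have htu : t + u * d = 1 := by rw [hudef]; field_simp; ring
  have htrτ : τ.trace = 1 := by
    rw [hτdef, Matrix.trace_add, Matrix.trace_smul, Matrix.trace_smul, hσ.2,
      Matrix.trace_one, Fintype.card_fin]
    simp only [smul_eq_mul, mul_one]
    exact_mod_cast congrArg (Complex.ofReal) htu
  have hur : u * r = (1 - t) * m := by rw [hudef, hmdef]; field_simp; try ring
  have htw : t * (w' - m) = w - m := by rw [htdef]; field_simp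
  have hc : t * w' + u * r = w := by
    rw [hur]
    have : t * w' + (1 - t) * m = t * (w' - m) + m := by ring
    rw [this, htw]; ring
  have hτI : (τ * I).trace = (w : ℂ) := by
    rw [hτdef, Matrix.add_mul, Matrix.smul_mul, Matrix.smul_mul, Matrix.one_mul,
      Matrix.trace_add, Matrix.trace_smul, Matrix.trace_smul, hσI, hTrI]
    simp only [smul_eq_mul]
    exact_mod_cast congrArg (Complex.ofReal) hc
  have hτM := hmin τ ⟨hτpsd, htrτ⟩ hτI
  have hττ : (τ * τ).trace = ((t ^ 2 * S + 2 * t * u + u ^ 2 * d : ℝ) : ℂ) := by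
    rw [hτdef]
    have hexp : ((t : ℂ) • σ + (u : ℂ) • 1) * ((t : ℂ) • σ + (u : ℂ) • 1)
        = ((t * t : ℝ) : ℂ) • (σ * σ) + ((t * u : ℝ) : ℂ) • σ + ((u * t : ℝ) : ℂ) • σ
          + ((u * u : ℝ) : ℂ) • (1 : Matrix (Fin d) (Fin d) ℂ) := by
      simp only [Matrix.add_mul, Matrix.mul_add, Matrix.smul_mul, Matrix.mul_smul,
        Matrix.one_mul, Matrix.mul_one, smul_smul]
      push_cast
      module
    rw [hexp]
    simp only [Matrix.trace_add, Matrix.trace_smul, Matrix.trace_one, Fintype.card_fin,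
      hσ.2, hσσ, smul_eq_mul, mul_one]
    push_cast
    ring
  have hρρ : ((ρ * ρ).trace).re = S := by rw [hSdef, hpur]
  rw [hρρ, hττ] at hτM
  simp only [Complex.ofReal_re] at hτM
  -- Step 3 : contradiction
  have hSd' : 1 < S * d := by
    have := (div_lt_iff₀ hd').mp hSd
    linarith
  have hu : u * d = 1 - t := by rw [hudef]; field_simp
  have hkey : (1 - t) * (1 + t) * (S * d - 1) > 0 := by
    apply mul_pos (mul_pos (by linarith) (by linarith)) (by linarith)
  nlinarith [mul_le_mul_of_nonneg_right hτM hd'.le, hkey, hu, sq_nonneg u, mul_pos ht0 hd']
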